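/- arXiv:2112.02311 — 5 statements merged into one kernel-verified Lean document; each statement's English description precedes it below -/
import Mathlib

section
/- Fix a real ν and define B(ν, a) = ∫_{0}^{∞} x^{ν−1} e^{−x − a/x} dx for a > 0. Then for every a₀ > 0, the function a ↦ B(ν, a) has derivative −B(ν−1, a₀) at a₀; that is, HasDerivAt (fun a => ∫_{0}^{∞} x^{ν−1} e^{−x − a/x} dx) (−∫_{0}^{∞} x^{ν−2} e^{−x − a₀/x} dx) a₀. -/
open MeasureTheory Real

private lemma bessel_aux_integrable (s c : ℝ) (hc : 0 < c) :
    IntegrableOn (fun x : ℝ => x ^ s * Real.exp (-x - c / x)) (Set.Ioi 0) := by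
  obtain ⟨n, hn⟩ : ∃ n : ℕ, -s ≤ n := exists_nat_ge (-s)
  have hmeas : AEStronglyMeasurable (fun x : ℝ => x ^ s * Real.exp (-x - c / x))
      (volume.restrict (Set.Ioi 0)) := by
    apply ContinuousOn.aestronglyMeasurable _ measurableSet_Ioi
    apply ContinuousOn.mul
    · exact fun x hx => (Real.continuousAt_rpow_const x s (Or.inl (ne_of_gt hx))).continuousWithinAt
    · apply Real.continuous_exp.comp_continuousOn
      exact (continuousOn_id.neg).sub (continuousOn_const.div continuousOn_id
        fun x hx => ne_of_gt hx)
  have hGamma : IntegrableOn (fun x : ℝ => (n.factorial / c ^ n) *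
      (Real.exp (-x) * x ^ (s + n))) (Set.Ioi 0) := by
    have := (Real.GammaIntegral_convergent (s := s + n + 1) (by linarith)).const_mul
      ((n.factorial : ℝ) / c ^ n)
    simpa [IntegrableOn] using this
  refine Integrable.mono hGamma hmeas ?_
  filter_upwards [ae_restrict_mem measurableSet_Ioi] with x hx
  have hx0 : (0:ℝ) < x := hx
  have hexp : Real.exp (-(c / x)) ≤ n.factorial * (x / c) ^ n := by
    have h1 : (c / x) ^ n / n.factorial ≤ Real.exp (c / x) :=
      Real.pow_div_factorial_le_exp _ (le_of_lt (div_pos hc hx0)) n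
    rw [Real.exp_neg]
    rw [inv_le_comm₀ (Real.exp_pos _) (by positivity)]
    calc (n.factorial * (x / c) ^ n : ℝ)⁻¹ = (c / x) ^ n / n.factorial := by
          rw [div_pow, div_pow]
          field_simp
      _ ≤ Real.exp (c / x) := h1
  rw [Real.norm_of_nonneg (by positivity), Real.norm_of_nonneg (by positivity)]
  have key : x ^ s * Real.exp (-x - c / x) ≤
      (n.factorial / c ^ n) * (Real.exp (-x) * x ^ (s + n)) := by
    have : Real.exp (-x - c / x) = Real.exp (-x) * Real.exp (-(c / x)) := by
      rw [← Real.exp_add]; ring_nf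
    rw [this]
    have hxsn : x ^ (s + (n:ℝ)) = x ^ s * x ^ (n : ℕ) := by
      rw [Real.rpow_add hx0, Real.rpow_natCast]
    rw [hxsn]
    calc x ^ s * (Real.exp (-x) * Real.exp (-(c / x)))
        ≤ x ^ s * (Real.exp (-x) * (n.factorial * (x / c) ^ n)) := by
          apply mul_le_mul_of_nonneg_left _ (by positivity)
          exact mul_le_mul_of_nonneg_left hexp (Real.exp_pos _).le
      _ = (n.factorial / c ^ n) * (Real.exp (-x) * (x ^ s * x ^ (n:ℕ))) := by
          rw [div_pow]; field_simp
  simpa using key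

/-- Differentiation under the integral sign for the Bessel-type integral
`B(ν, a) = ∫₀^∞ x^(ν-1) e^(-x - a/x) dx`: for every `a₀ > 0`, the map `a ↦ B(ν, a)` has
derivative `-B(ν-1, a₀)` at `a₀`. -/
theorem bessel_type_integral_hasDerivAt (ν a₀ : ℝ) (ha : 0 < a₀) :
    HasDerivAt (fun a : ℝ => ∫ x in Set.Ioi (0 : ℝ), x ^ (ν - 1) * Real.exp (-x - a / x))
      (-∫ x in Set.Ioi (0 : ℝ), x ^ (ν - 2) * Real.exp (-x - a₀ / x)) a₀ := by
  set F : ℝ → ℝ → ℝ := fun a x => x ^ (ν - 1) * Real.exp (-x - a / x) with hF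
  set F' : ℝ → ℝ → ℝ := fun a x => -(x ^ (ν - 2) * Real.exp (-x - a / x)) with hF'
  have hmeas : ∀ (s a : ℝ), AEStronglyMeasurable (fun x : ℝ => x ^ s * Real.exp (-x - a / x))
      (volume.restrict (Set.Ioi 0)) := by
    intro s a
    apply ContinuousOn.aestronglyMeasurable _ measurableSet_Ioi
    apply ContinuousOn.mul
    · exact fun x hx => (Real.continuousAt_rpow_const x s (Or.inl (ne_of_gt hx))).continuousWithinAt
    · apply Real.continuous_exp.comp_continuousOn
      exact (continuousOn_id.neg).sub (continuousOn_const.div continuousOn_id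
        fun x hx => ne_of_gt hx)
  have key := hasDerivAt_integral_of_dominated_loc_of_deriv_le
    (F := F) (F' := F') (x₀ := a₀) (μ := volume.restrict (Set.Ioi 0))
    (bound := fun x => x ^ (ν - 2) * Real.exp (-x - (a₀ / 2) / x))
    (s := Metric.ball a₀ (a₀ / 2)) (Metric.ball_mem_nhds _ (by linarith))
    (Filter.Eventually.of_forall fun a => hmeas (ν - 1) a)
    (bessel_aux_integrable (ν - 1) a₀ ha)
    ((hmeas (ν - 2) a₀).neg)
    ?_ (bessel_aux_integrable (ν - 2) (a₀ / 2) (by linarith)) ?_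
  · have heq : (∫ x in Set.Ioi (0:ℝ), F' a₀ x) =
        -∫ x in Set.Ioi (0:ℝ), x ^ (ν - 2) * Real.exp (-x - a₀ / x) := by
      rw [hF']; simp [integral_neg]
    rw [← heq]
    exact key.2
  · -- bound
    filter_upwards [ae_restrict_mem measurableSet_Ioi] with x hx
    intro a haball
    have hx0 : (0:ℝ) < x := hx
    have ha2 : a₀ / 2 ≤ a := by
      have := abs_lt.mp (by simpa [Real.dist_eq] using haball)
      linarith [this.1]
    have : Real.exp (-x - a / x) ≤ Real.exp (-x - (a₀ / 2) / x) := by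
      apply Real.exp_le_exp.mpr
      have hdd : (a₀ / 2) / x ≤ a / x := by gcongr
      linarith
    calc ‖F' a x‖ = x ^ (ν - 2) * Real.exp (-x - a / x) := by
          rw [hF', norm_neg, Real.norm_of_nonneg (by positivity)]
      _ ≤ x ^ (ν - 2) * Real.exp (-x - (a₀ / 2) / x) :=
          mul_le_mul_of_nonneg_left this (by positivity)
  · -- differentiability
    filter_upwards [ae_restrict_mem measurableSet_Ioi] with x hx
    intro a _
    have hx0 : (0:ℝ) < x := hx
    have h1 : HasDerivAt (fun a : ℝ => -x - a / x) (-(1 / x)) a := by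
      simpa using ((hasDerivAt_id a).div_const x).const_sub (-x)
    have h2 : HasDerivAt (fun a : ℝ => Real.exp (-x - a / x))
        (Real.exp (-x - a / x) * (-(1 / x))) a := h1.exp
    have h3 : HasDerivAt (fun a : ℝ => F a x)
        (x ^ (ν - 1) * (Real.exp (-x - a / x) * (-(1 / x)))) a := h2.const_mul _
    convert h3 using 1
    show -(x ^ (ν - 2) * Real.exp (-x - a / x)) = x ^ (ν - 1) * (Real.exp (-x - a / x) * -(1 / x))
    have hpow : x ^ (ν - 2) = x ^ (ν - 1) * x⁻¹ := by
      rw [← Real.rpow_neg_one x, ← Real.rpow_add hx0]; ring_nf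
    rw [hpow]; field_simp
    all_goals rfl
end

section
/- Let q be a positive integer and let φ, ψ : Fin q → ℝ → ℝ be measurable functions such that for all i, j the product x ↦ φ_i(x)·ψ_j(x) is integrable on (0, ∞). Then ∫_{0 < x_1 < x_2 < ⋯ < x_q} det[φ_i(x_j)]_{i,j} · det[ψ_i(x_j)]_{i,j} dx_1 ⋯ dx_q = det[ ∫_{0}^{∞} φ_i(x) ψ_j(x) dx ]_{i,j}, where the left-hand side is the Lebesgue integral over the ordered region {x ∈ (Fin q → ℝ) : 0 < x_1 < ⋯ < x_q} of the product of the two q×q determinants with (i,j) entries φ_i(x_j) and ψ_i(x_j), and the right-hand side is the determinant of the q×q matrix of pairwise integrals. -/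
open MeasureTheory

namespace AndreiefAux
open Finset Equiv

lemma perm_eq_one_of_strictMono {q : ℕ} (π : Equiv.Perm (Fin q)) (h : StrictMono ⇑π) :
    π = 1 := by
  have hinv : StrictMono ⇑π⁻¹ := by
    intro a b hab
    by_contra hc
    push_neg at hc
    have := h.monotone hc
    simp only [Equiv.Perm.inv_def, Equiv.apply_symm_apply] at this
    exact absurd hab (not_lt.2 this)
  have inst : WellFoundedLT (Fin q) := inferInstance
  refine Equiv.ext fun i => le_antisymm ?_ (@StrictMono.le_apply _ _ inst _ h i)
  have := @StrictMono.le_apply _ _ inst _ hinv (π i)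
  simpa using this

lemma fubini_pi {q : ℕ} (h : Fin q → ℝ → ℝ) (hi : ∀ j, IntegrableOn (h j) (Set.Ioi 0)) :
    IntegrableOn (fun x : Fin q → ℝ => ∏ j, h j (x j))
        (Set.univ.pi fun _ => Set.Ioi 0) ∧
      ∫ x in Set.univ.pi fun _ : Fin q => Set.Ioi (0:ℝ), ∏ j, h j (x j)
        = ∏ j, ∫ x in Set.Ioi (0:ℝ), h j x := by
  have hΩ : MeasurableSet (Set.univ.pi fun _ : Fin q => Set.Ioi (0:ℝ)) :=
    MeasurableSet.univ_pi fun _ => measurableSet_Ioi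
  set g : Fin q → ℝ → ℝ := fun j => (Set.Ioi 0).indicator (h j) with hg
  have hgint : ∀ j, Integrable (g j) := fun j =>
    (integrable_indicator_iff measurableSet_Ioi).2 (hi j)
  have key : (Set.univ.pi fun _ : Fin q => Set.Ioi (0:ℝ)).indicator
      (fun x => ∏ j, h j (x j)) = fun x => ∏ j, g j (x j) := by
    funext x
    by_cases hx : x ∈ Set.univ.pi fun _ : Fin q => Set.Ioi (0:ℝ)
    · rw [Set.indicator_of_mem hx]
      refine Finset.prod_congr rfl fun j _ => ?_
      exact (Set.indicator_of_mem (hx j (Set.mem_univ j)) _).symm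
    · rw [Set.indicator_of_notMem hx]
      simp only [Set.mem_pi, Set.mem_univ, forall_true_left, not_forall] at hx
      obtain ⟨j, hj⟩ := hx
      exact (Finset.prod_eq_zero (Finset.mem_univ j)
        (by simp [hg, Set.indicator_of_notMem hj])).symm
  constructor
  · exact (integrable_indicator_iff hΩ).1 (key ▸ Integrable.fintype_prod hgint)
  · rw [← integral_indicator hΩ, key, volume_pi, integral_fintype_prod_eq_prod]
    exact Finset.prod_congr rfl fun j _ => integral_indicator measurableSet_Ioi

lemma sum_sum_perm {q : ℕ} (M : Matrix (Fin q) (Fin q) ℝ) :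
    ∑ σ : Equiv.Perm (Fin q), ∑ τ : Equiv.Perm (Fin q),
      (((Equiv.Perm.sign σ : ℤ) : ℝ) * ((Equiv.Perm.sign τ : ℤ) : ℝ)) * ∏ j, M (σ j) (τ j)
    = (q.factorial : ℝ) * M.det := by
  have hdetT : ∑ ρ : Equiv.Perm (Fin q), ((Equiv.Perm.sign ρ : ℤ) : ℝ) * ∏ i, M i (ρ i)
      = M.det := by
    rw [← Matrix.det_transpose M, Matrix.det_apply']
    exact Finset.sum_congr rfl fun ρ _ => by simp [Matrix.transpose_apply]
  have inner : ∀ σ : Equiv.Perm (Fin q),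
      ∑ τ : Equiv.Perm (Fin q),
        (((Equiv.Perm.sign σ : ℤ) : ℝ) * ((Equiv.Perm.sign τ : ℤ) : ℝ)) * ∏ j, M (σ j) (τ j)
      = M.det := by
    intro σ
    rw [← Equiv.sum_comp (Equiv.mulRight σ)
      (fun τ => (((Equiv.Perm.sign σ : ℤ) : ℝ) * ((Equiv.Perm.sign τ : ℤ) : ℝ))
        * ∏ j, M (σ j) (τ j))]
    rw [← hdetT]
    refine Finset.sum_congr rfl fun ρ _ => ?_
    have hp : ∏ j, M (σ j) (((Equiv.mulRight σ) ρ) j) = ∏ i, M i (ρ i) := by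
      rw [← Equiv.prod_comp σ (fun i => M i (ρ i))]
      rfl
    rw [hp]
    have hs : Equiv.Perm.sign ((Equiv.mulRight σ) ρ) = Equiv.Perm.sign ρ * Equiv.Perm.sign σ := by
      simp [Equiv.Perm.sign_mul]
    rw [hs]
    rcases Int.units_eq_one_or (Equiv.Perm.sign σ) with h | h <;>
      rcases Int.units_eq_one_or (Equiv.Perm.sign ρ) with h' | h' <;>
        simp [h, h']
  rw [Finset.sum_congr rfl fun σ _ => inner σ, Finset.sum_const, Finset.card_univ,
    Fintype.card_perm, Fintype.card_fin, nsmul_eq_mul]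

end AndreiefAux

/-- Andréief determinant integral identity over the ordered region
`0 < x₁ < x₂ < ⋯ < x_q`: the integral of the product of the two determinants
`det[φ_i(x_j)]` and `det[ψ_i(x_j)]` equals the determinant of the matrix of
pairwise integrals `∫₀^∞ φ_i ψ_j`. -/
theorem andreief_ordered (q : ℕ) (hq : 0 < q) (φ ψ : Fin q → ℝ → ℝ)
    (hφ : ∀ i, Measurable (φ i)) (hψ : ∀ i, Measurable (ψ i))
    (hint : ∀ i j, IntegrableOn (fun x : ℝ => φ i x * ψ j x) (Set.Ioi 0)) :
    ∫ x in {x : Fin q → ℝ | (∀ i, 0 < x i) ∧ StrictMono x},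
        Matrix.det (Matrix.of fun i j => φ i (x j)) *
          Matrix.det (Matrix.of fun i j => ψ i (x j))
      = Matrix.det (Matrix.of fun i j => ∫ x in Set.Ioi (0 : ℝ), φ i x * ψ j x) := by
  classical
  set Ω : Set (Fin q → ℝ) := Set.univ.pi fun _ => Set.Ioi 0 with hΩdef
  have hΩ : MeasurableSet Ω := MeasurableSet.univ_pi fun _ => measurableSet_Ioi
  set S : Set (Fin q → ℝ) := {x : Fin q → ℝ | (∀ i, 0 < x i) ∧ StrictMono x} with hSdef
  set F : (Fin q → ℝ) → ℝ := fun x =>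
    Matrix.det (Matrix.of fun i j => φ i (x j)) * Matrix.det (Matrix.of fun i j => ψ i (x j))
    with hFdef
  set M : Matrix (Fin q) (Fin q) ℝ :=
    Matrix.of fun i j => ∫ x in Set.Ioi (0:ℝ), φ i x * ψ j x with hMdef
  set Sp : Equiv.Perm (Fin q) → Set (Fin q → ℝ) :=
    fun σ => {x | (∀ i, 0 < x i) ∧ StrictMono (x ∘ ⇑σ)} with hSpdef
  -- expansion of F
  have hF : ∀ x : Fin q → ℝ, F x = ∑ σ : Equiv.Perm (Fin q), ∑ τ : Equiv.Perm (Fin q),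
      (((Equiv.Perm.sign σ : ℤ) : ℝ) * ((Equiv.Perm.sign τ : ℤ) : ℝ)) *
        ∏ j, (φ (σ j) (x j) * ψ (τ j) (x j)) := by
    intro x
    rw [hFdef]
    simp only [Matrix.det_apply']
    rw [Finset.sum_mul_sum]
    refine Finset.sum_congr rfl fun σ _ => Finset.sum_congr rfl fun τ _ => ?_
    simp only [Matrix.of_apply]
    rw [Finset.prod_mul_distrib]
    ring
  have hterm : ∀ σ τ : Equiv.Perm (Fin q),
      IntegrableOn (fun x : Fin q → ℝ => ∏ j, (φ (σ j) (x j) * ψ (τ j) (x j))) Ω ∧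
      ∫ x in Ω, ∏ j, (φ (σ j) (x j) * ψ (τ j) (x j)) = ∏ j, M (σ j) (τ j) :=
    fun σ τ => AndreiefAux.fubini_pi (fun j t => φ (σ j) t * ψ (τ j) t)
      (fun j => hint (σ j) (τ j))
  have hFfun : F = fun x => ∑ σ : Equiv.Perm (Fin q), ∑ τ : Equiv.Perm (Fin q),
      (((Equiv.Perm.sign σ : ℤ) : ℝ) * ((Equiv.Perm.sign τ : ℤ) : ℝ)) *
        ∏ j, (φ (σ j) (x j) * ψ (τ j) (x j)) := funext hF
  have hFint : IntegrableOn F Ω := by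
    rw [hFfun]
    exact integrable_finset_sum _ fun σ _ => integrable_finset_sum _ fun τ _ =>
      ((hterm σ τ).1).const_mul _
  have hΩval : ∫ x in Ω, F x = (q.factorial : ℝ) * M.det := by
    calc ∫ x in Ω, F x
        = ∑ σ : Equiv.Perm (Fin q), ∑ τ : Equiv.Perm (Fin q),
            (((Equiv.Perm.sign σ : ℤ) : ℝ) * ((Equiv.Perm.sign τ : ℤ) : ℝ)) *
              ∏ j, M (σ j) (τ j) := by
          simp_rw [hF]
          rw [integral_finset_sum _ (fun σ _ => integrable_finset_sum _ fun τ _ =>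
            ((hterm σ τ).1).const_mul _)]
          refine Finset.sum_congr rfl fun σ _ => ?_
          rw [integral_finset_sum _ (fun τ _ => ((hterm σ τ).1).const_mul _)]
          refine Finset.sum_congr rfl fun τ _ => ?_
          rw [integral_const_mul, (hterm σ τ).2]
      _ = (q.factorial : ℝ) * M.det := AndreiefAux.sum_sum_perm M
  -- invariance of F under permutations of coordinates
  have hinvF : ∀ (π : Equiv.Perm (Fin q)) (x : Fin q → ℝ), F (fun j => x (π j)) = F x := by
    intro π x
    have h1 : (Matrix.of fun i j => φ i (x (π j)))
        = (Matrix.of fun i j => φ i (x j)).submatrix id ⇑π := rfl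
    have h2 : (Matrix.of fun i j => ψ i (x (π j)))
        = (Matrix.of fun i j => ψ i (x j)).submatrix id ⇑π := rfl
    show Matrix.det _ * Matrix.det _ = F x
    rw [h1, h2, Matrix.det_permute', Matrix.det_permute', hFdef]
    rcases Int.units_eq_one_or (Equiv.Perm.sign π) with h | h <;> rw [h] <;> push_cast <;> ring
  -- measurability of the pieces
  have hSpm : ∀ σ : Equiv.Perm (Fin q), MeasurableSet (Sp σ) := by
    intro σ
    have e1 : Sp σ = {x : Fin q → ℝ | ∀ i, 0 < x i} ∩ {x | StrictMono (x ∘ ⇑σ)} := rfl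
    rw [e1]
    refine MeasurableSet.inter ?_ ?_
    · have e2 : {x : Fin q → ℝ | ∀ i, 0 < x i} = ⋂ i, {x | 0 < x i} := by ext x; simp
      rw [e2]
      exact MeasurableSet.iInter fun i =>
        measurableSet_lt measurable_const (measurable_pi_apply i)
    · have e3 : {x : Fin q → ℝ | StrictMono (x ∘ ⇑σ)} =
          ⋂ (p : Fin q × Fin q) (_ : p.1 < p.2), {x | x (σ p.1) < x (σ p.2)} := by
        ext x
        simp only [Set.mem_iInter, Set.mem_setOf_eq]
        exact ⟨fun h p hp => h hp, fun h a b hab => h (a, b) hab⟩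
      rw [e3]
      exact MeasurableSet.iInter fun p => MeasurableSet.iInter fun _ =>
        measurableSet_lt (measurable_pi_apply _) (measurable_pi_apply _)
  have hdisj : Pairwise (Function.onFun Disjoint Sp) := by
    intro σ τ hne
    rw [Function.onFun, Set.disjoint_left]
    rintro x ⟨-, hx2⟩ ⟨-, hy2⟩
    have key : ∀ c, (x ∘ ⇑σ) ((σ⁻¹ * τ) c) = x (τ c) := by
      intro c; simp [Equiv.Perm.mul_apply]
    have hπ : StrictMono ⇑(σ⁻¹ * τ) := by
      intro a b hab
      have h3 : x (τ a) < x (τ b) := hy2 hab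
      rw [← key a, ← key b] at h3
      exact hx2.lt_iff_lt.mp h3
    exact hne (inv_mul_eq_one.mp (AndreiefAux.perm_eq_one_of_strictMono _ hπ))
  -- the null set of non-injective points
  set N : Set (Fin q → ℝ) := ⋃ p : Fin q × Fin q, {x | p.1 ≠ p.2 ∧ x p.1 = x p.2} with hNdef
  have hNnull : volume N = 0 := by
    refine measure_iUnion_null fun p => ?_
    by_cases hp : p.1 = p.2
    · have e : {x : Fin q → ℝ | p.1 ≠ p.2 ∧ x p.1 = x p.2} = ∅ := by ext x; simp [hp]
      simp [e]
    · set L : (Fin q → ℝ) →ₗ[ℝ] ℝ :=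
        (LinearMap.proj p.1 : (Fin q → ℝ) →ₗ[ℝ] ℝ) - LinearMap.proj p.2 with hL
      have hsub : {x : Fin q → ℝ | p.1 ≠ p.2 ∧ x p.1 = x p.2} ⊆ (LinearMap.ker L : Set _) := by
        intro x hx
        simp only [SetLike.mem_coe, LinearMap.mem_ker, hL, LinearMap.sub_apply,
          LinearMap.proj_apply, sub_eq_zero]
        exact hx.2
      refine measure_mono_null hsub (Measure.addHaar_submodule _ _ ?_)
      intro htop
      rw [LinearMap.ker_eq_top] at htop
      have h1 := DFunLike.congr_fun htop (Pi.single p.1 (1:ℝ))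
      simp [hL, LinearMap.sub_apply, LinearMap.proj_apply, Pi.single_eq_same,
        Pi.single_eq_of_ne (Ne.symm hp)] at h1
  have hUsub : (⋃ σ : Equiv.Perm (Fin q), Sp σ) ⊆ Ω := by
    refine Set.iUnion_subset fun σ x hx => ?_
    simp only [hΩdef, Set.mem_pi, Set.mem_univ, forall_true_left, Set.mem_Ioi]
    exact fun i => hx.1 i
  have hcover : Ω \ (⋃ σ : Equiv.Perm (Fin q), Sp σ) ⊆ N := by
    rintro x ⟨hxΩ, hxU⟩
    by_contra hxN
    simp only [hNdef, Set.mem_iUnion, Set.mem_setOf_eq, not_exists, not_and] at hxN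
    have hinj : Function.Injective x := by
      intro a b hab
      by_contra hne
      exact hxN (a, b) hne hab
    have hsm : StrictMono (x ∘ ⇑(Tuple.sort x)) :=
      (Tuple.monotone_sort x).strictMono_of_injective (hinj.comp (Tuple.sort x).injective)
    refine hxU (Set.mem_iUnion.2 ⟨Tuple.sort x, ?_, hsm⟩)
    intro i
    simpa using hxΩ i (Set.mem_univ i)
  have hae : Ω =ᵐ[volume] ⋃ σ : Equiv.Perm (Fin q), Sp σ := by
    rw [MeasureTheory.ae_eq_set]
    refine ⟨measure_mono_null hcover hNnull, ?_⟩
    rw [Set.diff_eq_empty.2 hUsub]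
    simp
  -- change of variables: each piece has the same integral as S
  have hSeq : ∀ σ : Equiv.Perm (Fin q), ∫ x in Sp σ, F x = ∫ x in S, F x := by
    intro σ
    set g := MeasurableEquiv.piCongrLeft (fun _ : Fin q => ℝ) σ with hgdef
    have hgapp : ∀ (x : Fin q → ℝ) (j), g x j = x (σ.symm j) := by
      intro x j
      conv_lhs => rw [show j = σ (σ.symm j) by simp]
      rw [hgdef]
      simp only [MeasurableEquiv.coe_piCongrLeft]
      exact Equiv.piCongrLeft_apply_apply (fun _ : Fin q => ℝ) σ x (σ.symm j)
    have hmp := MeasureTheory.volume_measurePreserving_piCongrLeft (fun _ : Fin q => ℝ) σ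
    have h1 := hmp.setIntegral_preimage_emb g.measurableEmbedding F (Sp σ)
    have hpre : ⇑g ⁻¹' (Sp σ) = S := by
      ext x
      simp only [Set.mem_preimage, hSpdef, hSdef, Set.mem_setOf_eq]
      have hc : (g x) ∘ ⇑σ = x := funext fun i => by
        rw [Function.comp_apply, hgapp]; simp
      constructor
      · rintro ⟨ha, hb⟩
        rw [hc] at hb
        exact ⟨fun i => by simpa [hgapp] using ha (σ i), hb⟩
      · rintro ⟨ha, hb⟩
        refine ⟨fun i => by rw [hgapp]; exact ha _, ?_⟩
        rw [hc]
        exact hb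
    have hFg : ∀ x : Fin q → ℝ, F (g x) = F x := by
      intro x
      have hx : (g x : Fin q → ℝ) = fun j => x (σ⁻¹ j) := funext fun j => hgapp x j
      rw [hx]
      exact hinvF σ⁻¹ x
    rw [hpre] at h1
    replace h1 : ∫ x in S, F (g x) = ∫ y in Sp σ, F y := h1
    simp_rw [hFg] at h1
    exact h1.symm
  have hsum : ∫ x in Ω, F x = (q.factorial : ℝ) * ∫ x in S, F x := by
    calc ∫ x in Ω, F x
        = ∫ x in ⋃ σ : Equiv.Perm (Fin q), Sp σ, F x := setIntegral_congr_set hae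
      _ = ∑ σ : Equiv.Perm (Fin q), ∫ x in Sp σ, F x :=
          integral_iUnion_fintype hSpm hdisj
            (fun σ => hFint.mono_set (fun x hx => hUsub (Set.mem_iUnion.2 ⟨σ, hx⟩)))
      _ = ∑ _σ : Equiv.Perm (Fin q), ∫ x in S, F x :=
          Finset.sum_congr rfl fun σ _ => hSeq σ
      _ = (q.factorial : ℝ) * ∫ x in S, F x := by
          rw [Finset.sum_const, Finset.card_univ, Fintype.card_perm, Fintype.card_fin,
            nsmul_eq_mul]
  have hfac : (q.factorial : ℝ) ≠ 0 := Nat.cast_ne_zero.2 q.factorial_ne_zero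
  show ∫ x in S, F x = M.det
  refine mul_left_cancel₀ hfac ?_
  rw [← hsum, hΩval]
end

section
/- Let q be a positive integer and let φ, ψ : Fin q → ℝ → ℝ be measurable functions such that for all i, j the product x ↦ φ_i(x)·ψ_j(x) is integrable on (0, ∞). Then ∫_{(0,∞)^q} det[φ_i(x_j)]_{i,j} · det[ψ_i(x_j)]_{i,j} dx_1 ⋯ dx_q = q! · det[ ∫_{0}^{∞} φ_i(x) ψ_j(x) dx ]_{i,j}. -/
open MeasureTheory

/-- Andréief determinant integral identity over the full orthant `(0,∞)^q`:
the integral of the product of the two determinants `det[φ_i(x_j)]` and `det[ψ_i(x_j)]`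
equals `q!` times the determinant of the matrix of pairwise integrals `∫₀^∞ φ_i ψ_j`. -/
theorem andreief_full (q : ℕ) (hq : 0 < q) (φ ψ : Fin q → ℝ → ℝ)
    (hφ : ∀ i, Measurable (φ i)) (hψ : ∀ i, Measurable (ψ i))
    (hint : ∀ i j, IntegrableOn (fun x : ℝ => φ i x * ψ j x) (Set.Ioi 0)) :
    ∫ x in Set.univ.pi (fun _ : Fin q => Set.Ioi (0 : ℝ)),
        Matrix.det (Matrix.of fun i j => φ i (x j)) *
          Matrix.det (Matrix.of fun i j => ψ i (x j))
      = (q.factorial : ℝ) *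
          Matrix.det (Matrix.of fun i j => ∫ x in Set.Ioi (0 : ℝ), φ i x * ψ j x) := by
  classical
  set S : Set (Fin q → ℝ) := Set.univ.pi (fun _ : Fin q => Set.Ioi (0 : ℝ)) with hS
  have hSm : MeasurableSet S := MeasurableSet.univ_pi (fun _ => measurableSet_Ioi)
  set ε : Equiv.Perm (Fin q) → ℝ := fun σ => ((Equiv.Perm.sign σ : ℤ) : ℝ) with hε
  set g : Equiv.Perm (Fin q) → Equiv.Perm (Fin q) → Fin q → ℝ → ℝ :=
    fun σ τ j => (Set.Ioi (0 : ℝ)).indicator (fun t => φ (σ j) t * ψ (τ j) t) with hg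
  set A : Matrix (Fin q) (Fin q) ℝ :=
    Matrix.of fun i j => ∫ x in Set.Ioi (0 : ℝ), φ i x * ψ j x with hA
  have hgint : ∀ σ τ j, Integrable (g σ τ j) := by
    intro σ τ j
    rw [hg]
    exact (integrable_indicator_iff measurableSet_Ioi).2 (hint (σ j) (τ j))
  have hgval : ∀ σ τ j, ∫ x, g σ τ j x = A (σ j) (τ j) := by
    intro σ τ j
    rw [hg, integral_indicator measurableSet_Ioi]
    rfl
  -- pointwise identity
  have key : ∀ x : Fin q → ℝ,
      S.indicator (fun x => Matrix.det (Matrix.of fun i j => φ i (x j)) *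
          Matrix.det (Matrix.of fun i j => ψ i (x j))) x
        = ∑ σ : Equiv.Perm (Fin q), ∑ τ : Equiv.Perm (Fin q),
            (ε σ * ε τ) * ∏ j, g σ τ j (x j) := by
    intro x
    by_cases hx : x ∈ S
    · have hxj : ∀ j, x j ∈ Set.Ioi (0 : ℝ) := fun j => hx j (Set.mem_univ j)
      rw [Set.indicator_of_mem hx]
      rw [Matrix.det_apply', Matrix.det_apply', Finset.sum_mul_sum]
      refine Finset.sum_congr rfl fun σ _ => Finset.sum_congr rfl fun τ _ => ?_
      have : ∀ j, g σ τ j (x j) = φ (σ j) (x j) * ψ (τ j) (x j) := fun j =>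
        Set.indicator_of_mem (hxj j) _
      simp only [this, Matrix.of_apply]
      rw [Finset.prod_mul_distrib]
      ring
    · rw [Set.indicator_of_notMem hx]
      obtain ⟨j0, hj0⟩ := not_forall.1 fun h => hx (Set.mem_univ_pi.2 h)
      symm
      refine Finset.sum_eq_zero fun σ _ => Finset.sum_eq_zero fun τ _ => ?_
      have : g σ τ j0 (x j0) = 0 := Set.indicator_of_notMem hj0 _
      rw [Finset.prod_eq_zero (Finset.mem_univ j0) this, mul_zero]
  rw [← integral_indicator hSm]
  calc ∫ x : Fin q → ℝ, S.indicator (fun x => Matrix.det (Matrix.of fun i j => φ i (x j)) *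
          Matrix.det (Matrix.of fun i j => ψ i (x j))) x
      = ∫ x : Fin q → ℝ, ∑ σ : Equiv.Perm (Fin q), ∑ τ : Equiv.Perm (Fin q),
          (ε σ * ε τ) * ∏ j, g σ τ j (x j) := by
        exact integral_congr_ae (Filter.Eventually.of_forall key)
    _ = ∑ σ : Equiv.Perm (Fin q), ∑ τ : Equiv.Perm (Fin q),
          ∫ x : Fin q → ℝ, (ε σ * ε τ) * ∏ j, g σ τ j (x j) := by
        rw [integral_finset_sum]
        · exact Finset.sum_congr rfl fun σ _ => integral_finset_sum _ fun τ _ =>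
            ((Integrable.fintype_prod (fun j => hgint σ τ j)).const_mul _)
        · intro σ _
          exact integrable_finset_sum _ fun τ _ =>
            ((Integrable.fintype_prod (fun j => hgint σ τ j)).const_mul _)
    _ = ∑ σ : Equiv.Perm (Fin q), ∑ τ : Equiv.Perm (Fin q),
          (ε σ * ε τ) * ∏ j, A (σ j) (τ j) := by
        refine Finset.sum_congr rfl fun σ _ => Finset.sum_congr rfl fun τ _ => ?_
        rw [integral_const_mul, volume_pi, integral_fintype_prod_eq_prod (f := g σ τ)]
        simp_rw [hgval]
    _ = (q.factorial : ℝ) * A.det := by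
        rw [Finset.sum_comm]
        have : ∀ τ : Equiv.Perm (Fin q),
            ∑ σ : Equiv.Perm (Fin q), (ε σ * ε τ) * ∏ j, A (σ j) (τ j) = A.det := by
          intro τ
          rw [Matrix.det_apply']
          refine Fintype.sum_equiv (Equiv.mulRight τ⁻¹) _ _ fun ρ => ?_
          simp only [Equiv.coe_mulRight]
          have h1 : ∏ j, A (ρ j) (τ j) = ∏ i, A ((ρ * τ⁻¹) i) i := by
            rw [← Equiv.prod_comp τ (fun i => A ((ρ * τ⁻¹) i) i)]
            refine Finset.prod_congr rfl fun j _ => ?_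
            simp [Equiv.Perm.mul_apply]
          have h2 : ((Equiv.Perm.sign (ρ * τ⁻¹) : ℤ) : ℝ) = ε ρ * ε τ := by
            simp only [hε, Equiv.Perm.sign_mul, Equiv.Perm.sign_inv]
            push_cast
            ring
          rw [h1, h2]
        simp_rw [this, Finset.sum_const, Finset.card_univ, Fintype.card_perm, Fintype.card_fin,
          nsmul_eq_mul]
end

section
/- Let q be a positive integer and let γ : Fin q → ℝ be pairwise distinct reals, and fix an index n. For t ∈ ℝ let γ^{(t)} denote the tuple γ with its n-th entry replaced by t, and define g(t) = ∏_{i<j} (γ^{(t)}_j − γ^{(t)}_i). Then g has derivative at t = γ_n equal to (∏_{i<j} (γ_j − γ_i)) · ∑_{i ≠ n} (γ_n − γ_i)^{−1}; that is, HasDerivAt g ((∏_{i<j}(γ_j − γ_i)) · ∑_{i≠n} 1/(γ_n − γ_i)) γ_n. -/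
open Finset

/-- Derivative of the Vandermonde determinant `∏_{i<j} (γ_j - γ_i)` with respect to the
node `γ_n`: replacing the `n`-th entry of the pairwise-distinct tuple `γ` by a variable `t`,
the resulting function of `t` has derivative
`(∏_{i<j}(γ_j - γ_i)) · ∑_{i ≠ n} (γ_n - γ_i)⁻¹` at `t = γ_n`. -/
theorem vandermonde_node_hasDerivAt (q : ℕ) (hq : 0 < q) (γ : Fin q → ℝ)
    (hγ : Function.Injective γ) (n : Fin q) :
    HasDerivAt
      (fun t : ℝ => ∏ i : Fin q, ∏ j ∈ Finset.Ioi i,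
        (Function.update γ n t j - Function.update γ n t i))
      ((∏ i : Fin q, ∏ j ∈ Finset.Ioi i, (γ j - γ i)) *
        ∑ i ∈ Finset.univ.erase n, (γ n - γ i)⁻¹)
      (γ n) := by
  classical
  set s : Finset ((_ : Fin q) × Fin q) := Finset.univ.sigma (fun i => Finset.Ioi i) with hs
  set F : ((_ : Fin q) × Fin q) → ℝ → ℝ :=
    fun p t => (if p.2 = n then t else γ p.2) - (if p.1 = n then t else γ p.1) with hF
  set d : ((_ : Fin q) × Fin q) → ℝ :=
    fun p => (if p.2 = n then (1:ℝ) else 0) - (if p.1 = n then (1:ℝ) else 0) with hd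
  have hfun : (fun t : ℝ => ∏ i : Fin q, ∏ j ∈ Finset.Ioi i,
      (Function.update γ n t j - Function.update γ n t i)) = fun t => ∏ p ∈ s, F p t := by
    funext t
    rw [hs, Finset.prod_sigma]
    simp [hF, Function.update_apply]
  have hder : ∀ p ∈ s, HasDerivAt (F p) (d p) (γ n) := by
    intro p _
    apply HasDerivAt.sub
    · split_ifs
      · exact hasDerivAt_id _
      · exact hasDerivAt_const _ _
    · split_ifs
      · exact hasDerivAt_id _
      · exact hasDerivAt_const _ _
  have H := HasDerivAt.finset_prod (u := s) (f := F) (f' := d) hder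
  rw [hfun]
  convert H using 1
  · rfl
  · rfl
  · funext t; exact (Finset.prod_apply t s F).symm
  -- now prove derivative values equal
  have hFγ : ∀ p : (_ : Fin q) × Fin q, F p (γ n) = γ p.2 - γ p.1 := by
    intro p
    simp only [hF]
    split_ifs with h1 h2 h2 <;> simp [h1, h2]
  set D : ℝ := ∏ i : Fin q, ∏ j ∈ Finset.Ioi i, (γ j - γ i) with hD
  have hDs : D = ∏ p ∈ s, (γ p.2 - γ p.1) := by rw [hD, hs, Finset.prod_sigma]
  have herase : ∀ p ∈ s, ∏ r ∈ s.erase p, (γ r.2 - γ r.1) = D * (γ p.2 - γ p.1)⁻¹ := by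
    intro p hp
    have hne : γ p.2 - γ p.1 ≠ 0 := by
      have : p.1 < p.2 := by simpa [hs] using hp
      exact sub_ne_zero.2 (fun h => absurd (hγ h) this.ne')
    field_simp
    rw [hDs, Finset.prod_erase_mul _ _ hp]
  calc D * ∑ i ∈ Finset.univ.erase n, (γ n - γ i)⁻¹
      = ∑ p ∈ s, (∏ r ∈ s.erase p, F r (γ n)) • d p := ?_
    _ = ∑ p ∈ s, (∏ r ∈ s.erase p, F r (γ n)) • d p := rfl
  -- main computation
  have key : ∑ p ∈ s, (∏ r ∈ s.erase p, F r (γ n)) • d p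
      = ∑ p ∈ s, D * (γ p.2 - γ p.1)⁻¹ * d p := by
    apply Finset.sum_congr rfl
    intro p hp
    rw [smul_eq_mul]
    congr 1
    rw [Finset.prod_congr rfl (fun r _ => hFγ r), herase p hp]
  rw [key, hs, Finset.sum_sigma]
  rw [← Finset.add_sum_erase _ _ (Finset.mem_univ n)]
  have h1 : ∑ j ∈ Finset.Ioi n, D * (γ j - γ n)⁻¹ *
      ((if j = n then (1:ℝ) else 0) - (if n = n then (1:ℝ) else 0))
      = ∑ j ∈ Finset.Ioi n, D * (γ n - γ j)⁻¹ := by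
    apply Finset.sum_congr rfl
    intro j hj
    have : j ≠ n := (Finset.mem_Ioi.1 hj).ne'
    rw [if_neg this, if_pos rfl]
    have : (γ n - γ j)⁻¹ = -(γ j - γ n)⁻¹ := by rw [← neg_sub, inv_neg]
    rw [this]; ring
  have h2 : ∀ i ∈ Finset.univ.erase n, ∑ j ∈ Finset.Ioi i, D * (γ j - γ i)⁻¹ *
      ((if j = n then (1:ℝ) else 0) - (if i = n then (1:ℝ) else 0))
      = if n ∈ Finset.Ioi i then D * (γ n - γ i)⁻¹ else 0 := by
    intro i hi
    have hin : i ≠ n := Finset.ne_of_mem_erase hi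
    rw [← Finset.sum_ite_eq' (Finset.Ioi i) n (fun j => D * (γ j - γ i)⁻¹)]
    apply Finset.sum_congr rfl
    intro j _
    rw [if_neg hin]
    split_ifs with h <;> simp [h]
  rw [h1, Finset.sum_congr rfl h2]
  have hsplit : (Finset.univ.erase n : Finset (Fin q)) = Finset.Iio n ∪ Finset.Ioi n := by
    ext i
    simp only [Finset.mem_erase, Finset.mem_univ, and_true, Finset.mem_union,
      Finset.mem_Iio, Finset.mem_Ioi]
    exact ne_iff_lt_or_gt
  have hdisj : Disjoint (Finset.Iio n) (Finset.Ioi n) := by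
    rw [Finset.disjoint_left]
    intro a ha hb
    exact absurd ((Finset.mem_Iio.1 ha).trans (Finset.mem_Ioi.1 hb)) (lt_irrefl a)
  have hlast : ∑ i ∈ Finset.univ.erase n, (if n ∈ Finset.Ioi i then D * (γ n - γ i)⁻¹ else 0)
      = ∑ i ∈ Finset.Iio n, D * (γ n - γ i)⁻¹ := by
    rw [← Finset.sum_filter]
    apply Finset.sum_congr _ (fun _ _ => rfl)
    ext i
    simp only [Finset.mem_filter, Finset.mem_erase, Finset.mem_univ, Finset.mem_Ioi,
      Finset.mem_Iio, true_and, and_true]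
    exact ⟨fun h => h.2, fun h => ⟨h.ne, h⟩⟩
  rw [hlast, Finset.mul_sum, hsplit, Finset.sum_union hdisj]
  exact add_comm _ _
end

section
/- Let q ≤ p be positive integers. The determinant of the q×q matrix G with entries G_{m,n} = Γ(p − q + m + n − 1) for m, n ∈ {1, …, q} equals ∏_{i=1}^{q} Γ(i)·Γ(p − q + i); equivalently, det G = (∏_{i=1}^{q} Γ(q − i + 1)·Γ(p − i + 1)), which is the reciprocal of the normalization constant K of Lemma 1 of the paper. -/
open Finset Polynomial

-- key factorial determinant
theorem det_factorial_hankel (q a : ℕ) :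
    Matrix.det (Matrix.of fun m n : Fin q => ((a + (m:ℕ) + (n:ℕ)).factorial : ℝ))
      = ∏ i : Fin q, ((i:ℕ).factorial : ℝ) * ((a + (i:ℕ)).factorial : ℝ) := by
  cases q with
  | zero => simp
  | succ q' =>
  set Q : Fin (q'+1) → ℝ[X] := fun n => ∏ k ∈ range (n:ℕ), (X + C ((a:ℝ) + k + 1)) with hQ
  have hmon : ∀ n, (Q n).Monic := fun n => monic_prod_of_monic _ _ fun k _ => monic_X_add_C _
  have hdeg : ∀ n, (Q n).natDegree = (n:ℕ) := by
    intro n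
    rw [hQ]
    rw [natDegree_prod_of_monic _ _ fun k _ => monic_X_add_C _]
    simp only [natDegree_X_add_C, Finset.sum_const, card_range, smul_eq_mul, mul_one]
  have heval : ∀ m n : Fin (q'+1),
      ((a + (m:ℕ)).factorial : ℝ) * (Q n).eval (m:ℝ) = ((a + (m:ℕ) + (n:ℕ)).factorial : ℝ) := by
    intro m n
    rw [hQ]
    simp only [eval_prod, eval_add, eval_X, eval_C]
    induction (n:ℕ) with
    | zero => simp
    | succ k ih =>
        rw [prod_range_succ, ← mul_assoc, ih,
          show a + (m:ℕ) + (k+1) = (a + (m:ℕ) + k) + 1 by ring, Nat.factorial_succ]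
        push_cast
        ring
  have hfac : (Matrix.of fun m n : Fin (q'+1) => ((a + (m:ℕ) + (n:ℕ)).factorial : ℝ))
      = Matrix.diagonal (fun m : Fin (q'+1) => ((a + (m:ℕ)).factorial : ℝ)) *
        Matrix.of (fun m n : Fin (q'+1) => (Q n).eval ((fun i : Fin (q'+1) => (i:ℝ)) m)) := by
    ext m n
    simp [Matrix.mul_apply, Matrix.diagonal, heval m n]
  rw [hfac, Matrix.det_mul, Matrix.det_diagonal,
    ← Matrix.det_eval_matrixOfPolynomials_eq_det_vandermonde _ Q hdeg hmon,
    Matrix.det_vandermonde_id_eq_superFactorial,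
    ← Nat.prod_range_succ_factorial, Finset.prod_mul_distrib,
    Fin.prod_univ_eq_prod_range (fun i => ((i.factorial : ℝ)))]
  push_cast
  ring

/-- The determinant of the `q × q` matrix with entries `Γ(p - q + m + n - 1)`
(for `1 ≤ m, n ≤ q`, written here with `0`-based indices `m, n : Fin q` as
`Γ(p - q + m + n + 1)`) equals `∏_{i=1}^{q} Γ(i) Γ(p - q + i)`, and equivalently
`∏_{i=1}^{q} Γ(q - i + 1) Γ(p - i + 1)`, the reciprocal of the normalization
constant `K` of Lemma 1. -/
theorem det_gamma_hankel (q p : ℕ) (hq : 0 < q) (hpq : q ≤ p) :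
    Matrix.det (Matrix.of fun m n : Fin q =>
        Real.Gamma ((p - q + (m : ℕ) + (n : ℕ) + 1 : ℕ) : ℝ))
      = ∏ i : Fin q, Real.Gamma (((i : ℕ) + 1 : ℕ) : ℝ) *
          Real.Gamma ((p - q + (i : ℕ) + 1 : ℕ) : ℝ) ∧
    Matrix.det (Matrix.of fun m n : Fin q =>
        Real.Gamma ((p - q + (m : ℕ) + (n : ℕ) + 1 : ℕ) : ℝ))
      = ∏ i : Fin q, Real.Gamma ((q - (i : ℕ) : ℕ) : ℝ) *
          Real.Gamma ((p - (i : ℕ) : ℕ) : ℝ) := by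
  have hG : ∀ k : ℕ, Real.Gamma (((k + 1 : ℕ)) : ℝ) = (k.factorial : ℝ) := fun k => by
    push_cast
    exact Real.Gamma_nat_eq_factorial k
  have e1 : (Matrix.of fun m n : Fin q =>
        Real.Gamma ((p - q + (m : ℕ) + (n : ℕ) + 1 : ℕ) : ℝ))
      = Matrix.of fun m n : Fin q => (((p - q) + (m : ℕ) + (n : ℕ)).factorial : ℝ) := by
    ext m n
    exact hG _
  have h1 : Matrix.det (Matrix.of fun m n : Fin q =>
        Real.Gamma ((p - q + (m : ℕ) + (n : ℕ) + 1 : ℕ) : ℝ))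
      = ∏ i : Fin q, Real.Gamma (((i : ℕ) + 1 : ℕ) : ℝ) *
          Real.Gamma ((p - q + (i : ℕ) + 1 : ℕ) : ℝ) := by
    rw [e1, det_factorial_hankel q (p - q)]
    exact Finset.prod_congr rfl fun i _ => by rw [hG, hG]
  refine ⟨h1, h1.trans ?_⟩
  rw [Fin.prod_univ_eq_prod_range
      (fun i => Real.Gamma (((i + 1 : ℕ)) : ℝ) * Real.Gamma ((p - q + i + 1 : ℕ) : ℝ)) q,
    Fin.prod_univ_eq_prod_range
      (fun i => Real.Gamma ((q - i : ℕ) : ℝ) * Real.Gamma ((p - i : ℕ) : ℝ)) q,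
    ← prod_range_reflect]
  refine Finset.prod_congr rfl fun j hj => ?_
  rw [mem_range] at hj
  have h1n : q - 1 - j + 1 = q - j := by omega
  have h2n : p - q + (q - 1 - j) + 1 = p - j := by omega
  rw [h1n, h2n]
end
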